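/- For the helicoid, the Laplacian of the second fundamental form satisfies (Δb)₁₂ = −2/(1+(x²)²)^{5/2}, (Δb)₁₁ = (Δb)₂₂ = 0; consequently Δb = 2Kb where K = −1/(1+(x²)²)² and b₁₂ = 1/√(1+(x²)²), b₁₁ = b₂₂ = 0. -/

import Mathlib

open scoped BigOperators

/-- Partial derivative in coordinate direction `i` on `ℝ²`. -/
noncomputable def pd (i : Fin 2) (f : ℝ × ℝ → ℝ) (x : ℝ × ℝ) : ℝ :=
  fderiv ℝ f x (if i = 0 then (1, 0) else (0, 1))

/-- Christoffel symbols `Γᵏᵢⱼ = (1/2) gᵏˡ(∂ᵢg_{jl} + ∂ⱼg_{il} − ∂ₗg_{ij})`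
of a metric `gm` with inverse `ginv`. -/
noncomputable def christoffel (gm ginv : Fin 2 → Fin 2 → ℝ × ℝ → ℝ)
    (k i j : Fin 2) (x : ℝ × ℝ) : ℝ :=
  (1 / 2) * ∑ l : Fin 2, ginv k l x *
    (pd i (gm j l) x + pd j (gm i l) x - pd l (gm i j) x)

/-- First covariant derivative of a symmetric 2-tensor:
`∇ₗb_{jk} = ∂ₗb_{jk} − Γᵐₗⱼb_{mk} − Γᵐₗₖb_{jm}`. -/
noncomputable def cov1 (gm ginv b : Fin 2 → Fin 2 → ℝ × ℝ → ℝ)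
    (l j k : Fin 2) (x : ℝ × ℝ) : ℝ :=
  pd l (b j k) x - (∑ m : Fin 2, christoffel gm ginv m l j x * b m k x)
    - ∑ m : Fin 2, christoffel gm ginv m l k x * b j m x

/-- Second covariant derivative `∇ₖ∇ₗb_{ij}` of a symmetric 2-tensor. -/
noncomputable def cov2 (gm ginv b : Fin 2 → Fin 2 → ℝ × ℝ → ℝ)
    (k l i j : Fin 2) (x : ℝ × ℝ) : ℝ :=
  pd k (fun y => cov1 gm ginv b l i j y) x
    - (∑ m : Fin 2, christoffel gm ginv m k l x * cov1 gm ginv b m i j x)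
    - (∑ m : Fin 2, christoffel gm ginv m k i x * cov1 gm ginv b l m j x)
    - ∑ m : Fin 2, christoffel gm ginv m k j x * cov1 gm ginv b l i m x

/-- Rough Laplacian `(Δb)_{ij} = gᵏˡ∇ₖ∇ₗb_{ij}` of a symmetric 2-tensor. -/
noncomputable def lapTensor (gm ginv b : Fin 2 → Fin 2 → ℝ × ℝ → ℝ)
    (i j : Fin 2) (x : ℝ × ℝ) : ℝ :=
  ∑ k : Fin 2, ∑ l : Fin 2, ginv k l x * cov2 gm ginv b k l i j x

/-- Metric of the helicoid: `g₁₁ = 1 + (x²)²`, `g₂₂ = 1`, `g₁₂ = 0`. -/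
noncomputable def gmHel : Fin 2 → Fin 2 → ℝ × ℝ → ℝ := fun i j x =>
  if i = j then (if i = 0 then 1 + x.2 ^ 2 else 1) else 0

/-- Inverse metric of the helicoid. -/
noncomputable def ginvHel : Fin 2 → Fin 2 → ℝ × ℝ → ℝ := fun i j x =>
  if i = j then (if i = 0 then (1 + x.2 ^ 2)⁻¹ else 1) else 0

/-- Second fundamental form of the helicoid: `b₁₁ = b₂₂ = 0`,
`b₁₂ = b₂₁ = 1/√(1 + (x²)²)`. -/
noncomputable def bHel : Fin 2 → Fin 2 → ℝ × ℝ → ℝ := fun i j x =>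
  if i = j then 0 else 1 / Real.sqrt (1 + x.2 ^ 2)

lemma pd_snd (f : ℝ → ℝ) (f' : ℝ) (x : ℝ × ℝ) (hf : HasDerivAt f f' x.2) (i : Fin 2) :
    pd i (fun y => f y.2) x = if i = 0 then 0 else f' := by
  have H : HasFDerivAt (fun y : ℝ × ℝ => f y.2)
      ((ContinuousLinearMap.smulRight (1 : ℝ →L[ℝ] ℝ) f').comp
        (ContinuousLinearMap.snd ℝ ℝ ℝ)) x :=
    (hf.hasFDerivAt).comp x (hasFDerivAt_snd)
  fin_cases i <;> simp [pd, H.fderiv]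

lemma gm00 : gmHel 0 0 = fun y => 1 + y.2 ^ 2 := rfl
lemma gm01 : gmHel 0 1 = fun _ => (0:ℝ) := rfl
lemma gm10 : gmHel 1 0 = fun _ => (0:ℝ) := rfl
lemma gm11 : gmHel 1 1 = fun _ => (1:ℝ) := rfl
lemma b00 : bHel 0 0 = fun _ => (0:ℝ) := rfl
lemma b11 : bHel 1 1 = fun _ => (0:ℝ) := rfl
lemma b01 : bHel 0 1 = fun y => 1 / Real.sqrt (1 + y.2 ^ 2) := rfl
lemma b10 : bHel 1 0 = fun y => 1 / Real.sqrt (1 + y.2 ^ 2) := rfl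

lemma hA (x : ℝ × ℝ) : (0:ℝ) < 1 + x.2 ^ 2 := by positivity
lemma h1 (x : ℝ × ℝ) : HasDerivAt (fun u : ℝ => 1 + u ^ 2) (2 * x.2) x.2 := by
  simpa using (hasDerivAt_pow 2 x.2).const_add 1
lemma hsqrt (x : ℝ × ℝ) :
    HasDerivAt (fun u : ℝ => Real.sqrt (1 + u ^ 2)) (x.2 / Real.sqrt (1 + x.2 ^ 2)) x.2 := by
  have h := (Real.hasDerivAt_sqrt (hA x).ne').comp x.2 (h1 x)
  refine HasDerivAt.congr_deriv h (Eq.symm ?_)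
  have : Real.sqrt (1 + x.2 ^ 2) ≠ 0 := (Real.sqrt_pos.mpr (hA x)).ne'
  field_simp
lemma hb (x : ℝ × ℝ) :
    HasDerivAt (fun u : ℝ => (Real.sqrt (1 + u ^ 2))⁻¹)
      (-x.2 / ((1 + x.2 ^ 2) * Real.sqrt (1 + x.2 ^ 2))) x.2 := by
  have hs0 : Real.sqrt (1 + x.2 ^ 2) ≠ 0 := (Real.sqrt_pos.mpr (hA x)).ne'
  have h := ((hasDerivAt_const x.2 (1:ℝ)).div (hsqrt x) hs0)
  have hs2 : Real.sqrt (1 + x.2 ^ 2) ^ 2 = 1 + x.2 ^ 2 := Real.sq_sqrt (hA x).le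
  simp only [Pi.div_def, one_div] at h
  refine HasDerivAt.congr_deriv h (Eq.symm ?_)
  rw [hs2]
  field_simp
  ring

lemma pd_b (i a b : Fin 2) (x : ℝ × ℝ) :
    pd i (bHel a b) x =
      if a ≠ b ∧ i = 1 then -x.2 / ((1 + x.2 ^ 2) * Real.sqrt (1 + x.2 ^ 2)) else 0 := by
  have hz : HasDerivAt (fun _ : ℝ => (0:ℝ)) 0 x.2 := hasDerivAt_const _ _
  fin_cases a <;> fin_cases b <;> fin_cases i <;>
    simp [b00, b01, b10, b11, one_div, pd_snd _ _ _ (hb x), pd_snd _ _ _ hz]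

lemma pd_gm (i a b : Fin 2) (x : ℝ × ℝ) :
    pd i (gmHel a b) x = if a = 0 ∧ b = 0 ∧ i = 1 then 2 * x.2 else 0 := by
  have h0 : HasDerivAt (fun _ : ℝ => (1 : ℝ)) 0 x.2 := hasDerivAt_const _ _
  have hz : HasDerivAt (fun _ : ℝ => (0 : ℝ)) 0 x.2 := hasDerivAt_const _ _
  fin_cases a <;> fin_cases b <;> fin_cases i <;>
    simp [gm00, gm01, gm10, gm11, pd_snd _ _ _ (h1 x), pd_snd _ _ _ h0, pd_snd _ _ _ hz]

lemma chr (k i j : Fin 2) (x : ℝ × ℝ) :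
    christoffel gmHel ginvHel k i j x =
      if k = 1 ∧ i = 0 ∧ j = 0 then -x.2
      else if k = 0 ∧ (i ≠ j) then x.2 / (1 + x.2 ^ 2)
      else 0 := by
  fin_cases k <;> fin_cases i <;> fin_cases j <;>
    simp [christoffel, Fin.sum_univ_two, pd_gm, ginvHel] <;> ring

lemma cov1_val (l a b : Fin 2) (x : ℝ × ℝ) :
    cov1 gmHel ginvHel bHel l a b x =
      if l = 0 ∧ a = 0 ∧ b = 0 then 2 * x.2 / Real.sqrt (1 + x.2 ^ 2)
      else if (l = 0 ∧ a = 1 ∧ b = 1) ∨ (l = 1 ∧ a ≠ b) then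
        -2 * x.2 / ((1 + x.2 ^ 2) * Real.sqrt (1 + x.2 ^ 2))
      else 0 := by
  have hs0 : Real.sqrt (1 + x.2 ^ 2) ≠ 0 := (Real.sqrt_pos.mpr (hA x)).ne'
  have hAne : (1 + x.2 ^ 2) ≠ 0 := (hA x).ne'
  fin_cases l <;> fin_cases a <;> fin_cases b <;>
    simp [cov1, Fin.sum_univ_two, chr, pd_b, bHel] <;> field_simp <;> ring

lemma hs2' (x : ℝ × ℝ) : Real.sqrt (1 + x.2 ^ 2) ^ 2 = 1 + x.2 ^ 2 := Real.sq_sqrt (hA x).le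
lemma hs0' (x : ℝ × ℝ) : (0:ℝ) < Real.sqrt (1 + x.2 ^ 2) := Real.sqrt_pos.mpr (hA x)

lemma hf1 (x : ℝ × ℝ) :
    HasDerivAt (fun u : ℝ => 2 * u / Real.sqrt (1 + u ^ 2))
      (2 / Real.sqrt (1 + x.2 ^ 2)
        - 2 * x.2 ^ 2 / ((1 + x.2 ^ 2) * Real.sqrt (1 + x.2 ^ 2))) x.2 := by
  have hnum : HasDerivAt (fun u : ℝ => 2 * u) 2 x.2 := by
    simpa using (hasDerivAt_id x.2).const_mul (2:ℝ)
  have h := hnum.div (hsqrt x) (hs0' x).ne'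
  refine HasDerivAt.congr_deriv h (Eq.symm ?_)
  set s := Real.sqrt (1 + x.2 ^ 2) with hs
  have hA' : (1:ℝ) + x.2 ^ 2 = s ^ 2 := (Real.sq_sqrt (hA x).le).symm
  have hsne : s ≠ 0 := (hs0' x).ne'
  rw [hA']
  field_simp

lemma hf2 (x : ℝ × ℝ) :
    HasDerivAt (fun u : ℝ => -2 * u / ((1 + u ^ 2) * Real.sqrt (1 + u ^ 2)))
      (-2 / ((1 + x.2 ^ 2) * Real.sqrt (1 + x.2 ^ 2))
        + 6 * x.2 ^ 2 / ((1 + x.2 ^ 2) ^ 2 * Real.sqrt (1 + x.2 ^ 2))) x.2 := by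
  have hnum : HasDerivAt (fun u : ℝ => -2 * u) (-2) x.2 := by
    simpa using (hasDerivAt_id x.2).const_mul (-2:ℝ)
  have hden : HasDerivAt (fun u : ℝ => (1 + u ^ 2) * Real.sqrt (1 + u ^ 2))
      (2 * x.2 * Real.sqrt (1 + x.2 ^ 2)
        + (1 + x.2 ^ 2) * (x.2 / Real.sqrt (1 + x.2 ^ 2))) x.2 := (h1 x).mul (hsqrt x)
  have hdne : (1 + x.2 ^ 2) * Real.sqrt (1 + x.2 ^ 2) ≠ 0 := by positivity
  have h := hnum.div hden hdne
  refine HasDerivAt.congr_deriv h (Eq.symm ?_)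
  set s := Real.sqrt (1 + x.2 ^ 2) with hs
  have hA' : (1:ℝ) + x.2 ^ 2 = s ^ 2 := (Real.sq_sqrt (hA x).le).symm
  have hsne : s ≠ 0 := (hs0' x).ne'
  rw [hA']
  field_simp
  ring

lemma pd_cov1 (k l a b : Fin 2) (x : ℝ × ℝ) :
    pd k (fun y => cov1 gmHel ginvHel bHel l a b y) x =
      if k = 1 ∧ l = 0 ∧ a = 0 ∧ b = 0 then
        2 / Real.sqrt (1 + x.2 ^ 2) - 2 * x.2 ^ 2 / ((1 + x.2 ^ 2) * Real.sqrt (1 + x.2 ^ 2))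
      else if k = 1 ∧ ((l = 0 ∧ a = 1 ∧ b = 1) ∨ (l = 1 ∧ a ≠ b)) then
        -2 / ((1 + x.2 ^ 2) * Real.sqrt (1 + x.2 ^ 2))
          + 6 * x.2 ^ 2 / ((1 + x.2 ^ 2) ^ 2 * Real.sqrt (1 + x.2 ^ 2))
      else 0 := by
  have hz : HasDerivAt (fun _ : ℝ => (0:ℝ)) 0 x.2 := hasDerivAt_const _ _
  have E : ∀ l a b : Fin 2, (fun y => cov1 gmHel ginvHel bHel l a b y) = fun y : ℝ × ℝ =>
      (if l = 0 ∧ a = 0 ∧ b = 0 then 2 * y.2 / Real.sqrt (1 + y.2 ^ 2)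
       else if (l = 0 ∧ a = 1 ∧ b = 1) ∨ (l = 1 ∧ a ≠ b) then
         -2 * y.2 / ((1 + y.2 ^ 2) * Real.sqrt (1 + y.2 ^ 2))
       else 0) := fun l a b => funext fun y => cov1_val l a b y
  fin_cases l <;> fin_cases a <;> fin_cases b <;> rw [E] <;> fin_cases k <;>
    first
      | simpa using pd_snd _ _ x hz 0
      | simpa using pd_snd _ _ x hz 1
      | simpa using pd_snd _ _ x (hf1 x) 0
      | simpa using pd_snd _ _ x (hf1 x) 1
      | simpa using pd_snd _ _ x (hf2 x) 0
      | simpa using pd_snd _ _ x (hf2 x) 1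

lemma lap_val (x : ℝ × ℝ) (i j : Fin 2) :
    lapTensor gmHel ginvHel bHel i j x =
      if i = j then 0
      else -2 / ((1 + x.2 ^ 2) ^ 2 * Real.sqrt (1 + x.2 ^ 2)) := by
  have h0 := (hs0' x).ne'
  have hAne := (hA x).ne'
  fin_cases i <;> fin_cases j <;>
    (simp only [lapTensor, cov2, Fin.sum_univ_two]
     simp only [pd_cov1]
     simp [ginvHel, chr, cov1_val]) <;>
    (set s := Real.sqrt (1 + x.2 ^ 2) with hs
     have hA' : (1:ℝ) + x.2 ^ 2 = s ^ 2 := (Real.sq_sqrt (hA x).le).symm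
     have hsne : s ≠ 0 := (hs0' x).ne'
     clear_value s
     rw [hA']
     field_simp) <;>
    first
      | ring1
      | linear_combination (2 * s ^ 24) * hA'
      | linear_combination 2 * hA'


/-- For the helicoid, `(Δb)₁₂ = −2/(1+(x²)²)^{5/2}`, `(Δb)₁₁ = (Δb)₂₂ = 0`;
consequently `Δb = 2Kb` with `K = −1/(1+(x²)²)²`. -/
theorem helicoid_delta_recurrent (x : ℝ × ℝ) :
    lapTensor gmHel ginvHel bHel 0 1 x = -2 / Real.sqrt ((1 + x.2 ^ 2) ^ 5) ∧
    lapTensor gmHel ginvHel bHel 0 0 x = 0 ∧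
    lapTensor gmHel ginvHel bHel 1 1 x = 0 ∧
    (∀ i j : Fin 2, lapTensor gmHel ginvHel bHel i j x =
      2 * (-1 / (1 + x.2 ^ 2) ^ 2) * bHel i j x) := by
  have hsq5 : Real.sqrt ((1 + x.2 ^ 2) ^ 5)
      = (1 + x.2 ^ 2) ^ 2 * Real.sqrt (1 + x.2 ^ 2) := by
    rw [show (1 + x.2 ^ 2) ^ 5 = ((1 + x.2 ^ 2) ^ 2 * Real.sqrt (1 + x.2 ^ 2)) ^ 2 by
      rw [mul_pow, hs2' x]; ring, Real.sqrt_sq (by positivity)]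
  have h0 := (hs0' x).ne'
  have hAne := (hA x).ne'
  refine ⟨?_, ?_, ?_, ?_⟩
  · rw [lap_val, hsq5]; norm_num
  · rw [lap_val]; norm_num
  · rw [lap_val]; norm_num
  · intro i j
    fin_cases i <;> fin_cases j <;> rw [lap_val] <;> simp [bHel] <;> field_simp <;> ring
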